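/- Let Λ ⊂ ℝ^n be a full-rank lattice with minimal (squared) norm λ₁ = min_{x ∈ Λ, x ≠ 0} ‖x‖², and let 0 < q < 1. Then Θ_Λ(q) = (1 - q^{λ₁}) - log(q) · λ₁ · ∫_1^∞ Σ_Λ(λ₁ t) q^{λ₁ t} dt, where Σ_Λ(r) = #{x ∈ Λ : ‖x‖² ≤ r}. -/

import Mathlib

open MeasureTheory Set Real Filter

namespace Stmt2Aux


noncomputable def F {n : ℕ} (M : Matrix (Fin n) (Fin n) ℝ) (z : Fin n → ℤ) : ℝ :=
  ∑ i, (M.mulVec (fun j => (z j : ℝ))) i ^ 2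

variable {n : ℕ} (M : Matrix (Fin n) (Fin n) ℝ)

lemma F_nonneg (z : Fin n → ℤ) : 0 ≤ F M z := Finset.sum_nonneg fun i _ => sq_nonneg _

lemma F_zero : F M 0 = 0 := by
  simp [F, Matrix.mulVec, dotProduct]

lemma exists_c (hM : IsUnit M.det) :
    ∃ c : ℝ, 0 < c ∧ ∀ z : Fin n → ℤ, c * (∑ i, ((z i : ℝ))^2) ≤ F M z := by
  obtain ⟨A, hA⟩ : ∃ A, A * M = 1 := ⟨M⁻¹, Matrix.nonsing_inv_mul M hM⟩
  set K : ℝ := ∑ j, ∑ i, (A j i)^2 with hK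
  have hK0 : 0 ≤ K := Finset.sum_nonneg fun j _ => Finset.sum_nonneg fun i _ => sq_nonneg _
  refine ⟨(K+1)⁻¹, by positivity, fun z => ?_⟩
  rw [inv_mul_le_iff₀ (by positivity)]
  set w : Fin n → ℝ := M.mulVec (fun j => (z j : ℝ)) with hw
  have hz : (fun j => (z j : ℝ)) = A.mulVec w := by
    rw [hw, Matrix.mulVec_mulVec, hA, Matrix.one_mulVec]
  have key : ∑ i, ((z i : ℝ))^2 ≤ K * F M z := by
    calc ∑ i, ((z i : ℝ))^2 = ∑ j, (A.mulVec w j)^2 := by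
          refine Finset.sum_congr rfl fun j _ => ?_
          rw [show ((z j : ℝ)) = A.mulVec w j from congrFun hz j]
    _ ≤ ∑ j, (∑ i, (A j i)^2) * (∑ i, (w i)^2) := by
        refine Finset.sum_le_sum fun j _ => ?_
        simpa [Matrix.mulVec, dotProduct] using
          Finset.sum_mul_sq_le_sq_mul_sq Finset.univ (fun i => A j i) w
    _ = K * F M z := by rw [← Finset.sum_mul]; rfl
  nlinarith [F_nonneg M z]

lemma finite_le (hM : IsUnit M.det) (r : ℝ) : {z : Fin n → ℤ | F M z ≤ r}.Finite := by
  obtain ⟨c, hc, hcl⟩ := exists_c M hM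
  have hsub : {z : Fin n → ℤ | F M z ≤ r} ⊆
      Set.pi Set.univ (fun _ : Fin n => Set.Icc (-(⌈r/c⌉) : ℤ) ⌈r/c⌉) := by
    intro z hz i _
    have h0 : ((z i : ℝ))^2 ≤ ∑ k, ((z k : ℝ))^2 :=
      Finset.single_le_sum (fun k _ => sq_nonneg ((z k : ℝ))) (Finset.mem_univ i)
    have h1 : ((z i:ℝ))^2 ≤ r / c := by
      rw [le_div_iff₀ hc]
      have := hcl z
      have hFr : F M z ≤ r := hz
      nlinarith
    have h2 : ((z i)^2 : ℤ) ≤ ⌈r/c⌉ := by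
      have := h1.trans (Int.le_ceil (r/c))
      exact_mod_cast this
    constructor <;> nlinarith [sq_nonneg (z i - 1), sq_nonneg (z i + 1)]
  exact (Set.Finite.pi fun _ => Set.finite_Icc _ _).subset hsub



lemma summable_pi_prod (g : ℤ → ℝ) (hg0 : ∀ m, 0 ≤ g m) (hg : Summable g) :
    ∀ m : ℕ, Summable (fun z : Fin m → ℤ => ∏ i, g (z i)) := by
  intro m
  induction m with
  | zero =>
      haveI : Subsingleton (Fin 0 → ℤ) := ⟨fun a b => funext fun i => i.elim0⟩
      haveI : Finite (Fin 0 → ℤ) := Finite.of_subsingleton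
      exact Summable.of_finite
  | succ m ih =>
      have h2 : Summable (fun p : ℤ × (Fin m → ℤ) => g p.1 * ∏ i, g (p.2 i)) :=
        Summable.mul_of_nonneg (f := g) (g := fun z : Fin m → ℤ => ∏ i, g (z i)) hg ih hg0
          (fun z => Finset.prod_nonneg fun i _ => hg0 _)
      rw [← (Fin.consEquiv (fun _ : Fin (m+1) => ℤ)).summable_iff]
      refine h2.congr fun p => ?_
      show g p.1 * ∏ i, g (p.2 i) = ∏ i, g ((Fin.consEquiv (fun _ : Fin (m+1) => ℤ)) p i)
      rw [Fin.prod_univ_succ]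
      simp [Fin.consEquiv]


lemma summable_gauss {a : ℝ} (ha : 0 < a) :
    Summable (fun m : ℤ => Real.exp (-a * (m : ℝ)^2)) := by
  have hnat : Summable (fun k : ℕ => Real.exp (-a * (k : ℝ)^2)) := by
    have h1 : Summable (fun k : ℕ => Real.exp (-a) ^ k) :=
      summable_geometric_of_lt_one (Real.exp_pos _).le
        (Real.exp_lt_one_iff.mpr (by linarith))
    refine h1.of_nonneg_of_le (fun k => (Real.exp_pos _).le) (fun k => ?_)
    have : Real.exp (-a * (k : ℝ)^2) = Real.exp (-a) ^ (k^2) := by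
      rw [← Real.exp_nat_mul]
      congr 1
      push_cast
      ring
    rw [this]
    refine pow_le_pow_of_le_one (Real.exp_pos _).le (Real.exp_le_one_iff.mpr (by linarith)) ?_
    exact Nat.le_self_pow (by norm_num) k
  apply Summable.of_nat_of_neg <;> simpa using hnat




lemma summable_qF (hM : IsUnit M.det) {q : ℝ} (hq0 : 0 < q) (hq1 : q < 1) :
    Summable (fun z : Fin n → ℤ => q ^ F M z) := by
  obtain ⟨c, hc, hcl⟩ := exists_c M hM
  have hL : Real.log q < 0 := Real.log_neg hq0 hq1
  have ha : 0 < -(c * Real.log q) := by nlinarith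
  set g : ℤ → ℝ := fun m => Real.exp (-(-(c * Real.log q)) * (m : ℝ)^2) with hg
  have hgs : Summable g := by simpa [hg] using summable_gauss ha
  refine Summable.of_nonneg_of_le (fun z => Real.rpow_nonneg hq0.le _) (fun z => ?_)
    (summable_pi_prod g (fun m => (Real.exp_pos _).le) hgs n)
  have h1 : q ^ F M z = Real.exp (Real.log q * F M z) := Real.rpow_def_of_pos hq0 _
  have h2 : (∏ i, g (z i)) = Real.exp (∑ i, c * Real.log q * ((z i : ℝ))^2) := by
    rw [Real.exp_sum]
    refine Finset.prod_congr rfl fun i _ => ?_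
    simp only [hg, neg_neg]
  rw [h1, h2, Real.exp_le_exp, ← Finset.mul_sum]
  have hS : c * ∑ i, ((z i : ℝ))^2 ≤ F M z := hcl z
  calc Real.log q * F M z ≤ Real.log q * (c * ∑ i, ((z i : ℝ))^2) :=
        mul_le_mul_of_nonpos_left hS hL.le
    _ = c * Real.log q * ∑ i, ((z i : ℝ))^2 := by ring


lemma integrableOn_exp_mul {c : ℝ} (hc : c < 0) (a : ℝ) :
    IntegrableOn (fun t => Real.exp (c * t)) (Ioi a) := by
  have := exp_neg_integrableOn_Ioi a (show 0 < -c by linarith)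
  simpa using this

lemma integral_exp_mul_Ioi {c : ℝ} (hc : c < 0) (a : ℝ) :
    ∫ t in Ioi a, Real.exp (c * t) = -Real.exp (c * a) / c := by
  have hderiv : ∀ x ∈ Ici a, HasDerivAt (fun t => Real.exp (c * t) / c)
      (Real.exp (c * x)) x := by
    intro x _
    have h := ((Real.hasDerivAt_exp (c * x)).comp x ((hasDerivAt_id x).const_mul c)).div_const c
    have hne : c ≠ 0 := hc.ne
    have heq : Real.exp (c * x) * (c * 1) / c = Real.exp (c * x) := by
      field_simp
    rw [heq] at h
    exact h
  have htend : Tendsto (fun t => Real.exp (c * t) / c) atTop (nhds (0 / c)) := by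
    refine Tendsto.div_const ?_ c
    have h1 : Tendsto (fun t : ℝ => c * t) atTop atBot := by
      simpa using (tendsto_id (α := ℝ) (x := atTop)).const_mul_atTop_of_neg hc
    exact Real.tendsto_exp_atBot.comp h1
  have := integral_Ioi_of_hasDerivAt_of_tendsto' hderiv (integrableOn_exp_mul hc a)
    (by simpa using htend)
  rw [this]
  ring


lemma q_eq_exp {q : ℝ} (hq0 : 0 < q) (lam t : ℝ) :
    q ^ (lam * t) = Real.exp ((Real.log q * lam) * t) := by
  rw [Real.rpow_def_of_pos hq0]
  ring_nf

lemma integrable_piece {q : ℝ} (hq0 : 0 < q) (hq1 : q < 1) {lam : ℝ} (hlam : 0 < lam) (s : ℝ) :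
    IntegrableOn ((Ici s).indicator (fun t => q ^ (lam * t))) (Ioi (1:ℝ)) := by
  have hL : Real.log q * lam < 0 :=
    mul_neg_of_neg_of_pos (Real.log_neg hq0 hq1) hlam
  have h : IntegrableOn (fun t => q ^ (lam * t)) (Ioi (1:ℝ)) := by
    simp_rw [q_eq_exp hq0]
    exact integrableOn_exp_mul hL 1
  exact h.indicator measurableSet_Ici

lemma integral_piece {q : ℝ} (hq0 : 0 < q) (hq1 : q < 1) {lam u : ℝ} (hlam : 0 < lam)
    (hu : lam ≤ u) :
    ∫ t in Ioi (1:ℝ), (Ici (u / lam)).indicator (fun t => q ^ (lam * t)) t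
      = q ^ u / (-(Real.log q * lam)) := by
  have hL : Real.log q * lam < 0 :=
    mul_neg_of_neg_of_pos (Real.log_neg hq0 hq1) hlam
  have h1 : (1:ℝ) ≤ u / lam := (one_le_div hlam).mpr hu
  have hae : (Ici (u / lam) ∩ Ioi 1 : Set ℝ) =ᵐ[volume] (Ioi (u / lam) : Set ℝ) := by
    have hmz : volume ({u / lam} : Set ℝ) = 0 := volume_singleton
    rw [Filter.eventuallyEq_set]
    filter_upwards [compl_mem_ae_iff.mpr hmz] with x hx
    have hxne : x ≠ u / lam := hx
    constructor
    · rintro ⟨hx1, _⟩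
      exact lt_of_le_of_ne hx1 (Ne.symm hxne)
    · intro hxg
      exact ⟨mem_Ici.mpr (le_of_lt (mem_Ioi.mp hxg)), mem_Ioi.mpr (lt_of_le_of_lt h1 (mem_Ioi.mp hxg))⟩
  rw [integral_indicator measurableSet_Ici, Measure.restrict_restrict measurableSet_Ici,
    Measure.restrict_congr_set hae]
  simp_rw [q_eq_exp hq0]
  rw [integral_exp_mul_Ioi hL]
  have h2 : Real.log q * lam * (u / lam) = Real.log q * u := by
    field_simp
  rw [h2, Real.rpow_def_of_pos hq0]
  rw [neg_div, div_neg]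




theorem main (hM : IsUnit M.det) (lam : ℝ)
    (hlam : IsLeast {r : ℝ | ∃ z : Fin n → ℤ, z ≠ 0 ∧ r = F M z} lam)
    (q : ℝ) (hq0 : 0 < q) (hq1 : q < 1) :
    (∑' z : Fin n → ℤ, q ^ F M z) =
      (1 - q ^ lam) - Real.log q * lam *
        ∫ t in Set.Ioi (1 : ℝ),
          (Nat.card {z : Fin n → ℤ // F M z ≤ lam * t} : ℝ) * q ^ (lam * t) := by
  obtain ⟨hmem, hlb⟩ := hlam
  obtain ⟨z₀, hz₀ne, hz₀eq⟩ := hmem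
  -- lam > 0
  have hlam0 : 0 < lam := by
    obtain ⟨c, hc, hcl⟩ := exists_c M hM
    obtain ⟨i, hi⟩ := Function.ne_iff.mp hz₀ne
    have hzi : ((z₀ i : ℝ)) ≠ 0 := Int.cast_ne_zero.2 hi
    have hpos : (0:ℝ) < ∑ k, ((z₀ k : ℝ))^2 :=
      Finset.sum_pos' (fun k _ => sq_nonneg _) ⟨i, Finset.mem_univ i, by positivity⟩
    have := hcl z₀
    rw [hz₀eq]
    nlinarith
  have hL : Real.log q < 0 := Real.log_neg hq0 hq1
  set b : ℝ := -(Real.log q * lam) with hb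
  have hb0 : 0 < b := by rw [hb]; nlinarith
  set s : (Fin n → ℤ) → ℝ := fun z => max lam (F M z) with hs
  set g : (Fin n → ℤ) → ℝ → ℝ :=
    fun z => (Ici (s z / lam)).indicator (fun t => q ^ (lam * t)) with hg
  have key1 : ∀ z, ∫ t in Ioi (1:ℝ), g z t = q ^ s z / b :=
    fun z => integral_piece hq0 hq1 hlam0 (le_max_left _ _)
  have hsumF : Summable (fun z : Fin n → ℤ => q ^ F M z) := summable_qF M hM hq0 hq1
  have hsumS : Summable (fun z : Fin n → ℤ => q ^ s z) :=
    hsumF.of_nonneg_of_le (fun z => Real.rpow_nonneg hq0.le _)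
      (fun z => Real.rpow_le_rpow_of_exponent_ge hq0 hq1.le (le_max_right _ _))
  -- step 1
  have step1 : (∑' z : Fin n → ℤ, q ^ F M z) = (1 - q ^ lam) + ∑' z, q ^ s z := by
    rw [hsumF.tsum_eq_add_tsum_ite 0, hsumS.tsum_eq_add_tsum_ite 0]
    have h1 : q ^ F M 0 = 1 := by rw [F_zero]; exact Real.rpow_zero q
    have h2 : q ^ s 0 = q ^ lam := by
      rw [hs]; simp only []
      rw [F_zero, max_eq_left hlam0.le]
    have h3 : (∑' z : Fin n → ℤ, if z = 0 then 0 else q ^ F M z)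
        = ∑' z : Fin n → ℤ, if z = 0 then 0 else q ^ s z := by
      refine tsum_congr fun z => ?_
      by_cases hz : z = 0
      · simp [hz]
      · have : s z = F M z := max_eq_right (hlb ⟨z, hz, rfl⟩)
        simp [hz, this]
    rw [h1, h2, h3]
    ring
  -- pointwise identity of the tsum of pieces
  have hpt : ∀ t ∈ Ioi (1:ℝ), (∑' z, g z t)
      = (Nat.card {z : Fin n → ℤ // F M z ≤ lam * t} : ℝ) * q ^ (lam * t) := by
    intro t ht
    have hcond : ∀ z, g z t
        = Set.indicator {z' : Fin n → ℤ | F M z' ≤ lam * t} (fun _ => q ^ (lam * t)) z := by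
      intro z
      rw [hg]; simp only []
      rw [Set.indicator_apply, Set.indicator_apply]
      have : t ∈ Ici (s z / lam) ↔ z ∈ {z' : Fin n → ℤ | F M z' ≤ lam * t} := by
        rw [mem_Ici, div_le_iff₀ hlam0, Set.mem_setOf_eq]
        rw [hs]; simp only []
        rw [max_le_iff]
        constructor
        · rintro ⟨_, h⟩; rw [mul_comm] at h; exact h
        · intro h
          refine ⟨?_, by rw [mul_comm]; exact h⟩
          calc lam = lam * 1 := by ring
          _ ≤ lam * t := by nlinarith [(mem_Ioi.mp ht).le]
          _ = t * lam := mul_comm _ _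
      by_cases hmem : t ∈ Ici (s z / lam)
      · rw [if_pos hmem, if_pos (this.mp hmem)]
      · rw [if_neg hmem, if_neg (fun h => hmem (this.mpr h))]
    rw [tsum_congr hcond]
    have hfin2 : {z' : Fin n → ℤ | F M z' ≤ lam * t}.Finite := finite_le M hM _
    rw [← tsum_subtype]
    haveI := hfin2.fintype
    rw [tsum_fintype, Finset.sum_const, nsmul_eq_mul, Finset.card_univ]
    congr 1
    norm_cast
    exact (Nat.card_eq_fintype_card (α := ↥{z' : Fin n → ℤ | F M z' ≤ lam * t})).symm
  -- step 2
  have hmeas : ∀ z, AEStronglyMeasurable (g z) (volume.restrict (Ioi (1:ℝ))) :=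
    fun z => (integrable_piece hq0 hq1 hlam0 _).aestronglyMeasurable
  have hint : ∀ z, Integrable (g z) (volume.restrict (Ioi (1:ℝ))) :=
    fun z => integrable_piece hq0 hq1 hlam0 _
  have hnn : ∀ z t, 0 ≤ g z t := by
    intro z t
    rw [hg]; simp only []
    exact Set.indicator_nonneg (fun _ _ => Real.rpow_nonneg hq0.le _) t
  have hfin : (∑' z : Fin n → ℤ, ∫⁻ t in Ioi (1:ℝ), ‖g z t‖ₑ) ≠ ⊤ := by
    have heach : ∀ z : Fin n → ℤ, (∫⁻ t in Ioi (1:ℝ), ‖g z t‖ₑ)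
        = ENNReal.ofReal (q ^ s z / b) := by
      intro z
      have h1 : (∫⁻ t in Ioi (1:ℝ), ‖g z t‖ₑ)
          = ∫⁻ t in Ioi (1:ℝ), ENNReal.ofReal (g z t) :=
        lintegral_congr fun t => Real.enorm_eq_ofReal (hnn z t)
      rw [h1, ← ofReal_integral_eq_lintegral_ofReal (hint z) (ae_of_all _ (hnn z)), key1 z]
    simp_rw [heach]
    rw [← ENNReal.ofReal_tsum_of_nonneg
      (fun z => div_nonneg (Real.rpow_nonneg hq0.le _) hb0.le) (hsumS.div_const b)]
    exact ENNReal.ofReal_ne_top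
  have step2 : (∑' z, q ^ s z)
      = b * ∫ t in Ioi (1:ℝ),
          (Nat.card {z : Fin n → ℤ // F M z ≤ lam * t} : ℝ) * q ^ (lam * t) := by
    have e1 : (∑' z, q ^ s z) = ∑' z, b * (q ^ s z / b) := by
      refine tsum_congr fun z => ?_
      field_simp
    rw [e1, tsum_mul_left]
    congr 1
    have e2 : (∑' z, q ^ s z / b) = ∑' z, ∫ t in Ioi (1:ℝ), g z t :=
      tsum_congr fun z => (key1 z).symm
    rw [e2, ← integral_tsum hmeas hfin]
    exact setIntegral_congr_fun measurableSet_Ioi hpt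
  rw [step1, step2, hb]
  ring

end Stmt2Aux

theorem stmt_2 (n : ℕ) (M : Matrix (Fin n) (Fin n) ℝ) (hM : IsUnit M.det)
    (lam : ℝ)
    (hlam : IsLeast {r : ℝ | ∃ z : Fin n → ℤ, z ≠ 0 ∧
      r = ∑ i, (M.mulVec (fun j => (z j : ℝ))) i ^ 2} lam)
    (q : ℝ) (hq0 : 0 < q) (hq1 : q < 1) :
    (∑' z : Fin n → ℤ, q ^ (∑ i, (M.mulVec (fun j => (z j : ℝ))) i ^ 2)) =
      (1 - q ^ lam) - Real.log q * lam *
        ∫ t in Set.Ioi (1 : ℝ),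
          (Nat.card {z : Fin n → ℤ //
              ∑ i, (M.mulVec (fun j => (z j : ℝ))) i ^ 2 ≤ lam * t} : ℝ) *
            q ^ (lam * t) := Stmt2Aux.main M hM lam hlam q hq0 hq1
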